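/- When necessarily simultaneous conscious actions are performed, the fact that they are all being performed is common knowledge: Let G be a set of agents with actions {does_i}_{i∈G} that are necessarily simultaneous in R (for all i,j ∈ G, does_i is a necessary condition for does_j in R) and each conscious for its agent in R. Then for every j ∈ G, every i ∈ G, and every nonempty sequence i_1,...,i_m of agents from G, the nested-knowledge fact K_{i_1}···K_{i_m}(does_i) is a necessary condition for does_j in R. -/

import Mathlib

/-- Agent `i`'s knowledge operator in system `R` with local-state map `loc`. -/
def K {Agent LState Run : Type*} (R : Set Run) (loc : Run → ℕ → Agent → LState)
    (i : Agent) (φ : Run → ℕ → Prop) : Run → ℕ → Prop :=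
  fun r t => ∀ r' ∈ R, ∀ t' : ℕ, loc r' t' i = loc r t i → φ r' t'

/-- `ψ` is a necessary condition for the action `does` in system `R`. -/
def NecessaryFor {Run : Type*} (R : Set Run) (ψ does : Run → ℕ → Prop) : Prop :=
  ∀ r ∈ R, ∀ t : ℕ, does r t → ψ r t

/-- `does` is a conscious action for agent `i` in system `R`. -/
def Conscious {Agent LState Run : Type*} (R : Set Run) (loc : Run → ℕ → Agent → LState)
    (i : Agent) (does : Run → ℕ → Prop) : Prop :=
  ∀ r ∈ R, ∀ r' ∈ R, ∀ t t' : ℕ, loc r t i = loc r' t' i → (does r t ↔ does r' t')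

/-- The nested-knowledge fact `K_{i₁} K_{i₂} ⋯ K_{iₘ} ψ` for a list `[i₁,…,iₘ]`. -/
def Knest {Agent LState Run : Type*} (R : Set Run) (loc : Run → ℕ → Agent → LState)
    (l : List Agent) (ψ : Run → ℕ → Prop) : Run → ℕ → Prop :=
  l.foldr (fun i φ => K R loc i φ) ψ

/-- When necessarily simultaneous conscious actions are performed, that they are
all being performed is common knowledge. -/
theorem simultaneous_actions_common_knowledge {Agent LState Run : Type*}
    (R : Set Run) (loc : Run → ℕ → Agent → LState)
    (G : Set Agent) (does : Agent → Run → ℕ → Prop)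
    (hsimul : ∀ i ∈ G, ∀ j ∈ G, NecessaryFor R (does i) (does j))
    (hconscious : ∀ i ∈ G, Conscious R loc i (does i)) :
    ∀ j ∈ G, ∀ i ∈ G, ∀ l : List Agent, l ≠ [] → (∀ a ∈ l, a ∈ G) →
      NecessaryFor R (Knest R loc l (does i)) (does j) := by
  have main : ∀ l : List Agent, (∀ a ∈ l, a ∈ G) → ∀ i ∈ G, ∀ j ∈ G,
      NecessaryFor R (Knest R loc l (does i)) (does j) := by
    intro l
    induction l with
    | nil => intro _ i hi j hj; exact hsimul i hi j hj
    | cons a l ih =>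
      intro hG i hi j hj r hr t hd r' hr' t' hloc
      have ha : a ∈ G := hG a List.mem_cons_self
      have hda : does a r t := hsimul a ha j hj r hr t hd
      have hda' : does a r' t' :=
        (hconscious a ha r' hr' r hr t' t hloc).mpr hda
      exact ih (fun x hx => hG x (List.mem_cons_of_mem a hx)) i hi a ha r' hr' t' hda'
  intro j hj i hi l _ hG
  exact main l hG i hi j hj
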